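/- The centralizer in Sp(2n, ℝ) of the image of the diagonal embedding SL(2,ℝ) → Sp(2n,ℝ), sending [[a,b],[c,d]] to the block matrix [[a·I_n, b·I_n],[c·I_n, d·I_n]], equals the set of block matrices [[Q, 0],[0, Q]] with Q ∈ O(n). -/
import Mathlib


open Matrix

/-- The standard symplectic form `Ω = [[0, I],[-I, 0]]`. -/
def Omega (n : ℕ) : Matrix (Fin n ⊕ Fin n) (Fin n ⊕ Fin n) ℝ :=
  Matrix.fromBlocks 0 1 (-1) 0

/-- The diagonal embedding `SL(2,ℝ) → Sp(2n,ℝ)`,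
`[[a,b],[c,d]] ↦ [[a·I_n, b·I_n],[c·I_n, d·I_n]]`. -/
def rhoDiag (n : ℕ) (g : Matrix (Fin 2) (Fin 2) ℝ) :
    Matrix (Fin n ⊕ Fin n) (Fin n ⊕ Fin n) ℝ :=
  Matrix.fromBlocks (g 0 0 • 1) (g 0 1 • 1) (g 1 0 • 1) (g 1 1 • 1)

theorem stmt15 (n : ℕ) (M : Matrix (Fin n ⊕ Fin n) (Fin n ⊕ Fin n) ℝ)
    (hM : Mᵀ * Omega n * M = Omega n) :
    (∀ g : Matrix (Fin 2) (Fin 2) ℝ, g.det = 1 →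
        M * rhoDiag n g = rhoDiag n g * M) ↔
      ∃ Q : Matrix (Fin n) (Fin n) ℝ, Qᵀ * Q = 1 ∧
        M = Matrix.fromBlocks Q 0 0 Q := by
  constructor
  · intro h
    set A := M.toBlocks₁₁ with hA
    set B := M.toBlocks₁₂ with hB
    set C := M.toBlocks₂₁ with hC
    set D := M.toBlocks₂₂ with hD
    have hM' : M = Matrix.fromBlocks A B C D := (Matrix.fromBlocks_toBlocks M).symm
    have hg1 : rhoDiag n !![(1:ℝ),1;0,1] = Matrix.fromBlocks 1 1 0 1 := by
      simp [rhoDiag]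
    have hg2 : rhoDiag n !![(1:ℝ),0;1,1] = Matrix.fromBlocks 1 0 1 1 := by
      simp [rhoDiag]
    have h1 := h !![(1:ℝ),1;0,1] (by simp [Matrix.det_fin_two_of])
    have h2 := h !![(1:ℝ),0;1,1] (by simp [Matrix.det_fin_two_of])
    rw [hg1, hM', Matrix.fromBlocks_multiply, Matrix.fromBlocks_multiply] at h1
    rw [hg2, hM', Matrix.fromBlocks_multiply, Matrix.fromBlocks_multiply] at h2
    simp only [Matrix.mul_one, Matrix.one_mul, Matrix.mul_zero, Matrix.zero_mul,
      add_zero, zero_add, Matrix.fromBlocks_inj] at h1 h2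
    obtain ⟨e1, e2, e3, e4⟩ := h1
    obtain ⟨f1, f2, f3, f4⟩ := h2
    have hC0 : C = 0 := by
      have : A + C = A := e1.symm
      simpa using this
    have hB0 : B = 0 := by
      simpa using f1
    have hDA : D = A := by
      have := e2
      rw [hB0] at this
      simpa using this.symm
    rw [hC0, hB0, hDA] at hM'
    refine ⟨A, ?_, hM'⟩
    rw [hM', Omega, Matrix.fromBlocks_transpose, Matrix.fromBlocks_multiply,
      Matrix.fromBlocks_multiply] at hM
    simp only [Matrix.transpose_zero, Matrix.mul_zero, Matrix.zero_mul, Matrix.mul_one,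
      Matrix.mul_neg, Matrix.one_mul, add_zero, zero_add, Matrix.fromBlocks_inj] at hM
    exact hM.2.1
  · rintro ⟨Q, hQ, rfl⟩ g hg
    simp only [rhoDiag, Matrix.fromBlocks_multiply, Matrix.mul_zero, Matrix.zero_mul,
      add_zero, zero_add, Matrix.mul_smul, Matrix.smul_mul, Matrix.mul_one, Matrix.one_mul,
      smul_zero]
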